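/- Let f be a polynomial vector field and p a polynomial on ℝ^n, and let D_ℓ = {x ∈ ℝ^n : L^m_f p(x) = 0 for all m < ℓ}. Then there exists N such that D_ℓ = D_N for all ℓ ≥ N; moreover, every x ∈ D_N satisfies L^m_f p(x) = 0 for all m ∈ ℕ. -/
import Mathlib


open MvPolynomial

/-- The Lie derivative of a polynomial `p` along the polynomial vector field `f`:
`⟨∇p, f⟩ = ∑ j, (∂p/∂x_j) * f_j`. -/
noncomputable def lieDeriv {n : ℕ} (f : Fin n → MvPolynomial (Fin n) ℝ)
    (p : MvPolynomial (Fin n) ℝ) : MvPolynomial (Fin n) ℝ :=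
  ∑ j, MvPolynomial.pderiv j p * f j

/-- Iterated Lie derivatives: `lieIter f k p = L^k_f p`. -/
noncomputable def lieIter {n : ℕ} (f : Fin n → MvPolynomial (Fin n) ℝ)
    (k : ℕ) (p : MvPolynomial (Fin n) ℝ) : MvPolynomial (Fin n) ℝ :=
  match k with
  | 0 => p
  | k + 1 => lieDeriv f (lieIter f k p)

/-- The descending chain `D_ℓ = {x | ∀ m < ℓ, L^m_f p(x) = 0}` stabilizes at some `N`,
and on `D_N` all Lie derivatives vanish. -/
theorem vanishing_sets_stabilize
    {n : ℕ} (f : Fin n → MvPolynomial (Fin n) ℝ) (p : MvPolynomial (Fin n) ℝ)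
    (D : ℕ → Set (Fin n → ℝ))
    (hD : ∀ ℓ, D ℓ = {x | ∀ m < ℓ, MvPolynomial.eval x (lieIter f m p) = 0}) :
    ∃ N : ℕ, (∀ ℓ, N ≤ ℓ → D ℓ = D N) ∧
      ∀ x ∈ D N, ∀ m : ℕ, MvPolynomial.eval x (lieIter f m p) = 0 := by
  let I : ℕ →o Ideal (MvPolynomial (Fin n) ℝ) :=
    ⟨fun ℓ => Ideal.span {q | ∃ m < ℓ, q = lieIter f m p}, by
      intro a b hab
      apply Ideal.span_mono
      rintro q ⟨m, hm, rfl⟩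
      exact ⟨m, lt_of_lt_of_le hm hab, rfl⟩⟩
  obtain ⟨N, hN⟩ := monotone_stabilizes_iff_noetherian.mpr (inferInstance : IsNoetherian (MvPolynomial (Fin n) ℝ) (MvPolynomial (Fin n) ℝ)) I
  -- every lieIter f m p lies in I N
  have hmem : ∀ m : ℕ, lieIter f m p ∈ I N := by
    intro m
    by_cases h : m < N
    · exact Ideal.subset_span ⟨m, h, rfl⟩
    · have : lieIter f m p ∈ I (m + 1) :=
        Ideal.subset_span ⟨m, Nat.lt_succ_self m, rfl⟩
      rwa [← hN (m + 1) (by omega)] at this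
  have key : ∀ x ∈ D N, ∀ m : ℕ, MvPolynomial.eval x (lieIter f m p) = 0 := by
    intro x hx m
    rw [hD N] at hx
    have hker : I N ≤ RingHom.ker (MvPolynomial.eval x) := by
      apply Ideal.span_le.mpr
      rintro q ⟨k, hk, rfl⟩
      exact hx k hk
    exact hker (hmem m)
  refine ⟨N, ?_, key⟩
  intro ℓ hℓ
  apply Set.eq_of_subset_of_subset
  · rw [hD ℓ, hD N]
    intro x hx m hm
    exact hx m (lt_of_lt_of_le hm hℓ)
  · intro x hx
    rw [hD ℓ]
    intro m _
    exact key x hx m
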